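/- arXiv:1907.04757 — 6 statements merged into one kernel-verified Lean document; each statement's English description precedes it below -/
import Mathlib

section
/- Let α ∈ (0, π/2). There exist constants C > 0 and a₀ > 0 (depending only on α) such that for every u ∈ ℂ and every g ∈ ℂ with |g| = 1, if W(u,g) < a₀², then: (i) | |u|² − 1 | ≤ √(2·W(u,g)); and (ii) writing φ for the principal argument of u·conj(g) (so φ ∈ (−π, π]), either |φ − α| ≤ C·√(W(u,g)) or |φ + α| ≤ C·√(W(u,g)). -/
/-- The boundary anchoring energy density
`W(u,g) = (1/2)(|u|² − 1)² + (Re(u·conj g) − cos α)²`. -/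
noncomputable def Wdens (α : ℝ) (u g : ℂ) : ℝ :=
  (1 / 2) * (‖u‖ ^ 2 - 1) ^ 2 +
    ((u * (starRingEnd ℂ) g).re - Real.cos α) ^ 2

/-- Reverse Lipschitz bound for `cos` on an interval where `sin ≥ s`, ordered case. -/
lemma cos_rev_lipschitz_aux {lo hi s : ℝ} (hs : ∀ c ∈ Set.Icc lo hi, s ≤ Real.sin c)
    {x y : ℝ} (hx : x ∈ Set.Icc lo hi) (hy : y ∈ Set.Icc lo hi) (hxy : x ≤ y) :
    s * |x - y| ≤ |Real.cos x - Real.cos y| := by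
  rcases eq_or_lt_of_le hxy with heq | hlt
  · rw [heq, sub_self, abs_zero, mul_zero, sub_self, abs_zero]
  · obtain ⟨c, hc, hceq⟩ := exists_hasDerivAt_eq_slope Real.cos (fun t => -Real.sin t) hlt
      (Real.continuous_cos.continuousOn) (fun t _ => Real.hasDerivAt_cos t)
    have hcmem : c ∈ Set.Icc lo hi :=
      ⟨le_trans hx.1 hc.1.le, le_trans hc.2.le hy.2⟩
    have hsc : s ≤ Real.sin c := hs c hcmem
    have heq : Real.cos y - Real.cos x = -Real.sin c * (y - x) := by
      have hne : y - x ≠ 0 := sub_ne_zero.mpr (ne_of_gt hlt)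
      field_simp at hceq
      linarith [hceq]
    have h1 : |Real.cos x - Real.cos y| = |Real.sin c| * (y - x) := by
      rw [abs_sub_comm, heq, abs_mul, abs_neg, abs_of_pos (by linarith : (0:ℝ) < y - x)]
    rw [h1, abs_of_nonpos (by linarith), neg_sub]
    have hle : Real.sin c ≤ |Real.sin c| := le_abs_self _
    nlinarith

lemma cos_rev_lipschitz {lo hi s : ℝ} (hs : ∀ c ∈ Set.Icc lo hi, s ≤ Real.sin c)
    {x y : ℝ} (hx : x ∈ Set.Icc lo hi) (hy : y ∈ Set.Icc lo hi) :
    s * |x - y| ≤ |Real.cos x - Real.cos y| := by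
  rcases le_total x y with h | h
  · exact cos_rev_lipschitz_aux hs hx hy h
  · rw [abs_sub_comm, abs_sub_comm (Real.cos x)]
    exact cos_rev_lipschitz_aux hs hy hx h

set_option maxHeartbeats 1600000 in
/-- For `α ∈ (0, π/2)` there exist `C > 0` and `a₀ > 0` such that whenever `|g| = 1`
and `W(u,g) < a₀²`, the modulus satisfies `||u|² − 1| ≤ √(2·W(u,g))` and the principal
argument `φ` of `u·conj g` satisfies `|φ − α| ≤ C·√W` or `|φ + α| ≤ C·√W`. -/
theorem W_coercive (α : ℝ) (hα : α ∈ Set.Ioo 0 (Real.pi / 2)) :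
    ∃ C > (0 : ℝ), ∃ a₀ > (0 : ℝ), ∀ u g : ℂ, ‖g‖ = 1 →
      Wdens α u g < a₀ ^ 2 →
        |‖u‖ ^ 2 - 1| ≤ Real.sqrt (2 * Wdens α u g) ∧
        (|Complex.arg (u * (starRingEnd ℂ) g) - α| ≤ C * Real.sqrt (Wdens α u g) ∨
         |Complex.arg (u * (starRingEnd ℂ) g) + α| ≤ C * Real.sqrt (Wdens α u g)) := by
  obtain ⟨hα0, hα2⟩ := hα
  have hπ : 0 < Real.pi := Real.pi_pos
  set lo := α / 2 with hlo
  set hi := (α + Real.pi) / 2 with hhi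
  have hlo0 : 0 < lo := by positivity
  have hhiπ : hi < Real.pi := by rw [hhi]; linarith
  have hloα : lo < α := by rw [hlo]; linarith
  have hαhi : α < hi := by rw [hhi]; linarith
  -- lower bound on sin on [lo, hi]
  set s := min (Real.sin lo) (Real.sin hi) with hsdef
  have hs0 : 0 < s := by
    apply lt_min
    · exact Real.sin_pos_of_pos_of_lt_pi hlo0 (by linarith)
    · exact Real.sin_pos_of_pos_of_lt_pi (by linarith) hhiπ
  have hsin : ∀ c ∈ Set.Icc lo hi, s ≤ Real.sin c := by
    intro c hc
    obtain ⟨hc1, hc2⟩ := hc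
    rcases le_total c (Real.pi / 2) with h | h
    · calc s ≤ Real.sin lo := min_le_left _ _
        _ ≤ Real.sin c := by
          apply Real.strictMonoOn_sin.monotoneOn ⟨by linarith, by linarith⟩
            ⟨by linarith, h⟩ hc1
    · have h1 : Real.sin hi = Real.sin (Real.pi - hi) := (Real.sin_pi_sub hi).symm
      have h2 : Real.sin c = Real.sin (Real.pi - c) := (Real.sin_pi_sub c).symm
      calc s ≤ Real.sin hi := min_le_right _ _
        _ = Real.sin (Real.pi - hi) := h1
        _ ≤ Real.sin (Real.pi - c) := by
          apply Real.strictMonoOn_sin.monotoneOn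
            ⟨by linarith, by linarith⟩ ⟨by linarith, by linarith⟩ (by linarith)
        _ = Real.sin c := h2.symm
  -- strict decrease of cos gives positive gaps
  set ε₀ := min (Real.cos lo - Real.cos α) (Real.cos α - Real.cos hi) with hε₀def
  have hε₀0 : 0 < ε₀ := by
    apply lt_min
    · have := Real.strictAntiOn_cos (by constructor <;> [linarith; linarith] :
        lo ∈ Set.Icc 0 Real.pi) (by constructor <;> [linarith; linarith] :
        α ∈ Set.Icc 0 Real.pi) hloα
      linarith
    · have := Real.strictAntiOn_cos (by constructor <;> [linarith; linarith] :
        α ∈ Set.Icc 0 Real.pi) (by constructor <;> [linarith; linarith] :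
        hi ∈ Set.Icc 0 Real.pi) hαhi
      linarith
  have hsq2 : (0:ℝ) < 1 + Real.sqrt 2 := by positivity
  refine ⟨(1 + Real.sqrt 2) / s, div_pos hsq2 hs0,
    min (1/2) (ε₀ / (1 + Real.sqrt 2)), lt_min (by norm_num) (div_pos hε₀0 hsq2), ?_⟩
  set a₀ := min (1/2) (ε₀ / (1 + Real.sqrt 2)) with ha₀def
  have ha₀0 : 0 < a₀ := lt_min (by norm_num) (div_pos hε₀0 hsq2)
  intro u g hg hW
  set z := u * (starRingEnd ℂ) g with hz
  set W := Wdens α u g with hWdef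
  have hW0 : 0 ≤ W := by
    rw [hWdef, Wdens]; positivity
  have hXsq : (‖u‖ ^ 2 - 1) ^ 2 ≤ 2 * W := by
    rw [hWdef, Wdens]; nlinarith [sq_nonneg ((u * (starRingEnd ℂ) g).re - Real.cos α)]
  have hX : |‖u‖ ^ 2 - 1| ≤ Real.sqrt (2 * W) := by
    rw [← Real.sqrt_sq_eq_abs]
    exact Real.sqrt_le_sqrt hXsq
  refine ⟨hX, ?_⟩
  -- √W < a₀
  have hsW : Real.sqrt W < a₀ := by
    have := Real.sqrt_lt_sqrt hW0 hW
    rwa [Real.sqrt_sq ha₀0.le] at this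
  have hsWnn : 0 ≤ Real.sqrt W := Real.sqrt_nonneg _
  have hsqrt2 : Real.sqrt (2 * W) = Real.sqrt 2 * Real.sqrt W :=
    Real.sqrt_mul (by norm_num) _
  have h2lt : Real.sqrt 2 < 2 := by
    nlinarith [Real.sq_sqrt (by norm_num : (0:ℝ) ≤ 2), Real.sqrt_nonneg 2]
  -- |u| ≠ 0
  have habz : ‖z‖ = ‖u‖ := by
    rw [hz, norm_mul, Complex.norm_conj, hg, mul_one]
  have hXsmall : |‖u‖ ^ 2 - 1| < 1 := by
    calc |‖u‖ ^ 2 - 1| ≤ Real.sqrt 2 * Real.sqrt W := by rw [← hsqrt2]; exact hX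
      _ < Real.sqrt 2 * a₀ := by
          apply mul_lt_mul_of_pos_left hsW (by positivity)
      _ ≤ Real.sqrt 2 * (1/2) := by
          apply mul_le_mul_of_nonneg_left (min_le_left _ _) (Real.sqrt_nonneg 2)
      _ < 1 := by linarith
  have hu0 : ‖u‖ ≠ 0 := by
    intro h
    rw [h] at hXsmall
    norm_num at hXsmall
  have hz0 : z ≠ 0 := by
    intro h
    rw [h] at habz
    simp at habz
    exact hu0 habz.symm
  -- z.re = |z| cos(arg z)
  have hre : z.re = ‖z‖ * Real.cos z.arg := by
    have habne : ‖z‖ ≠ 0 := norm_ne_zero_iff.mpr hz0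
    rw [Complex.cos_arg hz0, mul_div_assoc', eq_div_iff habne]
    ring
  have hY : |z.re - Real.cos α| ≤ Real.sqrt W := by
    rw [← Real.sqrt_sq_eq_abs]
    apply Real.sqrt_le_sqrt
    rw [hWdef, Wdens]
    nlinarith [sq_nonneg (‖u‖ ^ 2 - 1)]
  -- |1 - |z|| ≤ ||z|² - 1|
  have habnn : 0 ≤ ‖u‖ := norm_nonneg u
  have h1z : |1 - ‖u‖| ≤ |‖u‖ ^ 2 - 1| := by
    have hfac : |‖u‖ ^ 2 - 1| = |‖u‖ - 1| * (‖u‖ + 1) := by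
      rw [show ‖u‖ ^ 2 - 1 = (‖u‖ - 1) * (‖u‖ + 1) by ring,
        abs_mul, abs_of_nonneg (show (0:ℝ) ≤ ‖u‖ + 1 by linarith)]
    rw [hfac, abs_sub_comm]
    nlinarith [abs_nonneg (‖u‖ - 1)]
  -- |cos(arg z) - cos α| ≤ (1+√2)√W
  have hcosbd : |Real.cos z.arg - Real.cos α| ≤ (1 + Real.sqrt 2) * Real.sqrt W := by
    have hcos1 : |Real.cos z.arg| ≤ 1 := Real.abs_cos_le_one _
    have key : Real.cos z.arg - Real.cos α =
        Real.cos z.arg * (1 - ‖z‖) + (z.re - Real.cos α) := by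
      rw [hre]; ring
    calc |Real.cos z.arg - Real.cos α|
        ≤ |Real.cos z.arg * (1 - ‖z‖)| + |z.re - Real.cos α| := by
          rw [key]; exact abs_add_le _ _
      _ ≤ |1 - ‖u‖| + Real.sqrt W := by
          rw [abs_mul, habz]
          have : |Real.cos z.arg| * |1 - ‖u‖| ≤ 1 * |1 - ‖u‖| :=
            mul_le_mul_of_nonneg_right hcos1 (abs_nonneg _)
          linarith [this, hY]
      _ ≤ Real.sqrt 2 * Real.sqrt W + Real.sqrt W := by
          have := le_trans h1z hX
          rw [hsqrt2] at this
          linarith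
      _ = (1 + Real.sqrt 2) * Real.sqrt W := by ring
  have hεlt : (1 + Real.sqrt 2) * Real.sqrt W < ε₀ := by
    calc (1 + Real.sqrt 2) * Real.sqrt W < (1 + Real.sqrt 2) * a₀ :=
          mul_lt_mul_of_pos_left hsW hsq2
      _ ≤ (1 + Real.sqrt 2) * (ε₀ / (1 + Real.sqrt 2)) :=
          mul_le_mul_of_nonneg_left (min_le_right _ _) hsq2.le
      _ = ε₀ := by field_simp
  -- localize x := |arg z|
  set x := |z.arg| with hxdef
  have hx0 : 0 ≤ x := abs_nonneg _
  have hxπ : x ≤ Real.pi := Complex.abs_arg_le_pi z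
  have hcosx : Real.cos x = Real.cos z.arg := Real.cos_abs _
  have hcosxbd : |Real.cos x - Real.cos α| < ε₀ := by
    rw [hcosx]; exact lt_of_le_of_lt hcosbd hεlt
  have hxlo : lo ≤ x := by
    by_contra h
    push_neg at h
    have := Real.strictAntiOn_cos (⟨hx0, hxπ⟩ : x ∈ Set.Icc 0 Real.pi)
      (⟨hlo0.le, by linarith⟩ : lo ∈ Set.Icc 0 Real.pi) h
    have h2 := abs_lt.mp hcosxbd
    have h3 : ε₀ ≤ Real.cos lo - Real.cos α := min_le_left _ _
    linarith [h2.2]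
  have hxhi : x ≤ hi := by
    by_contra h
    push_neg at h
    have := Real.strictAntiOn_cos (⟨by linarith, hhiπ.le⟩ : hi ∈ Set.Icc 0 Real.pi)
      (⟨hx0, hxπ⟩ : x ∈ Set.Icc 0 Real.pi) h
    have h2 := abs_lt.mp hcosxbd
    have h3 : ε₀ ≤ Real.cos α - Real.cos hi := min_le_right _ _
    linarith [h2.1]
  -- reverse Lipschitz
  have hmvt : s * |x - α| ≤ |Real.cos x - Real.cos α| :=
    cos_rev_lipschitz hsin ⟨hxlo, hxhi⟩ ⟨hloα.le, hαhi.le⟩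
  have hxα : |x - α| ≤ (1 + Real.sqrt 2) / s * Real.sqrt W := by
    rw [div_mul_eq_mul_div, le_div_iff₀ hs0]
    calc |x - α| * s = s * |x - α| := by ring
      _ ≤ |Real.cos x - Real.cos α| := hmvt
      _ ≤ (1 + Real.sqrt 2) * Real.sqrt W := by rw [hcosx]; exact hcosbd
  rcases le_or_gt 0 z.arg with h | h
  · left
    rwa [hxdef, abs_of_nonneg h] at hxα
  · right
    rw [hxdef, abs_of_neg h] at hxα
    rwa [show z.arg + α = -(-z.arg - α) by ring, abs_neg]
end

section
/- Let a be a real number with 0 < a < 1/2, and let m, n be integers. Then (m + a)² + (n − a)² ≥ (m + n − 1) + a² + (1 − a)², with equality if and only if m = 0 and n = 1. -/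
/-- For `0 < a < 1/2` and integers `m, n`,
`(m + a)² + (n − a)² ≥ (m + n − 1) + a² + (1 − a)²`,
with equality iff `m = 0` and `n = 1`. -/
theorem pair_inequality (a : ℝ) (ha : 0 < a) (ha' : a < 1 / 2) (m n : ℤ) :
    ((m : ℝ) + a) ^ 2 + ((n : ℝ) - a) ^ 2 ≥
      ((m : ℝ) + (n : ℝ) - 1) + a ^ 2 + (1 - a) ^ 2 ∧
    (((m : ℝ) + a) ^ 2 + ((n : ℝ) - a) ^ 2 =
      ((m : ℝ) + (n : ℝ) - 1) + a ^ 2 + (1 - a) ^ 2 ↔ m = 0 ∧ n = 1) := by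
  set M : ℝ := (m : ℝ) with hM
  set N : ℝ := (n : ℝ) with hN
  have key : (M + a) ^ 2 + (N - a) ^ 2 - ((M + N - 1) + a ^ 2 + (1 - a) ^ 2)
      = M * (M - 1 + 2 * a) + (N - 1) * (N - 2 * a) := by ring
  have hm : M ≤ 0 ∨ 1 ≤ M := by
    rcases le_or_gt m 0 with h | h
    · left; rw [hM]; exact_mod_cast h
    · right; rw [hM]; exact_mod_cast h
  have hn : N ≤ 0 ∨ 1 ≤ N := by
    rcases le_or_gt n 0 with h | h
    · left; rw [hN]; exact_mod_cast h
    · right; rw [hN]; exact_mod_cast h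
  have hP : 0 ≤ M * (M - 1 + 2 * a) := by
    rcases hm with h | h
    · have : M - 1 + 2 * a < 0 := by linarith
      nlinarith
    · nlinarith
  have hQ : 0 ≤ (N - 1) * (N - 2 * a) := by
    rcases hn with h | h
    · nlinarith
    · nlinarith
  have hPzero : M * (M - 1 + 2 * a) = 0 → m = 0 := by
    intro h
    have : M = 0 ∨ M - 1 + 2 * a = 0 := mul_eq_zero.mp h
    rcases this with h' | h'
    · rw [hM] at h'; exact_mod_cast h'
    · rcases hm with h2 | h2 <;> [linarith; (exfalso; linarith)]
  have hQzero : (N - 1) * (N - 2 * a) = 0 → n = 1 := by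
    intro h
    have : N - 1 = 0 ∨ N - 2 * a = 0 := mul_eq_zero.mp h
    rcases this with h' | h'
    · have : N = 1 := by linarith
      rw [hN] at this; exact_mod_cast this
    · rcases hn with h2 | h2 <;> [(exfalso; linarith); linarith]
  constructor
  · nlinarith
  · constructor
    · intro h
      have hsum : M * (M - 1 + 2 * a) + (N - 1) * (N - 2 * a) = 0 := by linarith [key]
      have hP0 : M * (M - 1 + 2 * a) = 0 := by linarith
      have hQ0 : (N - 1) * (N - 2 * a) = 0 := by linarith
      exact ⟨hPzero hP0, hQzero hQ0⟩
    · rintro ⟨rfl, rfl⟩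
      push_cast [hM, hN]
      ring
end

section
/- Let α ∈ (0, π/2) and set C_α := (α/π)² + (1 − α/π)². Let N^v, N^b be natural numbers, let n⁰ : {1, …, N^v} → ℤ and n⁻, n⁺ : {1, …, N^b} → ℤ be families of integers, and let D := Σ_{j=1}^{N^v} n⁰_j + Σ_{i=1}^{N^b} (n⁻_i + n⁺_i). Then Σ_{j=1}^{N^v} (n⁰_j)² + Σ_{i=1}^{N^b} [ (n⁻_i + α/π)² + (n⁺_i − α/π)² ] ≥ |D| · C_α. -/
lemma key_pair (β : ℝ) (hβ0 : 0 < β) (hβh : β < 1/2) (n m : ℤ) :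
    |((n : ℝ) + m)| * (β ^ 2 + (1 - β) ^ 2) ≤ ((n : ℝ) + β) ^ 2 + ((m : ℝ) - β) ^ 2 := by
  have hcase : n + m = 0 ∨ n + m = 1 ∨ n + m = -1 ∨ 2 ≤ n + m ∨ n + m ≤ -2 := by omega
  rcases hcase with h | h | h | h | h
  · have hm : (m : ℝ) = -(n : ℝ) := by
      have : (m : ℤ) = -n := by omega
      exact_mod_cast congrArg (Int.cast : ℤ → ℝ) this
    rw [hm]
    simp only [add_neg_cancel, abs_zero, zero_mul]
    positivity
  · have hm : (m : ℝ) = 1 - (n : ℝ) := by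
      have : (m : ℤ) = 1 - n := by omega
      exact_mod_cast congrArg (Int.cast : ℤ → ℝ) this
    have habs : |((n : ℝ) + m)| = 1 := by rw [hm]; ring_nf; simp
    rw [habs, one_mul]
    have hn : (n : ℤ) ≤ 0 ∨ 1 ≤ n := by omega
    rcases hn with hn | hn
    · have hn' : (n : ℝ) ≤ 0 := by exact_mod_cast hn
      rw [hm]; nlinarith [sq_nonneg ((n:ℝ))]
    · have hn' : (1 : ℝ) ≤ (n : ℝ) := by exact_mod_cast hn
      rw [hm]; nlinarith [sq_nonneg ((n:ℝ))]
  · have hm : (m : ℝ) = -1 - (n : ℝ) := by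
      have : (m : ℤ) = -1 - n := by omega
      exact_mod_cast congrArg (Int.cast : ℤ → ℝ) this
    have habs : |((n : ℝ) + m)| = 1 := by rw [hm]; ring_nf; simp
    rw [habs, one_mul]
    have hn : (n : ℤ) ≤ -1 ∨ 0 ≤ n := by omega
    rcases hn with hn | hn
    · have hn' : (n : ℝ) ≤ -1 := by exact_mod_cast hn
      rw [hm]; nlinarith [sq_nonneg ((n:ℝ))]
    · have hn' : (0 : ℝ) ≤ (n : ℝ) := by exact_mod_cast hn
      rw [hm]; nlinarith [sq_nonneg ((n:ℝ))]
  all_goals {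
    have hk2 : (2 : ℝ) ≤ |((n : ℝ) + m)| := by
      have : (2 : ℝ) ≤ |((n + m : ℤ) : ℝ)| := by
        rw [← Int.cast_abs]
        have h2 : (2:ℤ) ≤ |n + m| := by
          rcases abs_cases (n + m) with ⟨he, _⟩ | ⟨he, _⟩ <;> omega
        exact_mod_cast h2
      simpa using this
    have hC1 : β ^ 2 + (1 - β) ^ 2 ≤ 1 := by nlinarith
    have hsq : |((n : ℝ) + m)| ^ 2 = ((n : ℝ) + m) ^ 2 := sq_abs _
    nlinarith [sq_nonneg (((n : ℝ) + β) - ((m : ℝ) - β)), abs_nonneg ((n : ℝ) + m)]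
  }

lemma key_single (β : ℝ) (hβ0 : 0 < β) (hβh : β < 1/2) (n : ℤ) :
    |(n : ℝ)| * (β ^ 2 + (1 - β) ^ 2) ≤ (n : ℝ) ^ 2 := by
  have hC1 : β ^ 2 + (1 - β) ^ 2 ≤ 1 := by nlinarith
  have hCnn : (0:ℝ) ≤ β ^ 2 + (1 - β) ^ 2 := by positivity
  have h1 : |(n : ℝ)| ≤ (n : ℝ) ^ 2 := by
    rw [← Int.cast_abs, ← sq_abs, ← Int.cast_abs]
    have : |n| ≤ |n| ^ 2 := by
      rcases abs_cases n with ⟨he, _⟩ | ⟨he, _⟩ <;> nlinarith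
    exact_mod_cast this
  calc |(n : ℝ)| * (β ^ 2 + (1 - β) ^ 2) ≤ |(n : ℝ)| * 1 :=
        mul_le_mul_of_nonneg_left hC1 (abs_nonneg _)
    _ = |(n : ℝ)| := mul_one _
    _ ≤ (n : ℝ) ^ 2 := h1

open Finset in
/-- The degree lemma (lower bound): for `α ∈ (0, π/2)`, boundary-vortex degrees `n⁰`,
light/heavy boojum degrees `n⁻, n⁺`, and total degree `D`,
`Σ (n⁰)² + Σ [(n⁻ + α/π)² + (n⁺ − α/π)²] ≥ |D|·C_α`. -/
theorem degree_lemma_lower_bound (α : ℝ) (hα : α ∈ Set.Ioo 0 (Real.pi / 2))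
    (Nv Nb : ℕ) (n0 : Fin Nv → ℤ) (nm np : Fin Nb → ℤ) (D : ℤ)
    (hD : D = (∑ j, n0 j) + ∑ i, (nm i + np i)) :
    (∑ j, ((n0 j : ℝ)) ^ 2) +
      ∑ i, (((nm i : ℝ) + α / Real.pi) ^ 2 + ((np i : ℝ) - α / Real.pi) ^ 2) ≥
      |(D : ℝ)| * ((α / Real.pi) ^ 2 + (1 - α / Real.pi) ^ 2) := by
  have hπ := Real.pi_pos
  set β := α / Real.pi with hβdef
  have hβ0 : 0 < β := div_pos hα.1 hπ
  have hβh : β < 1/2 := by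
    rw [hβdef, div_lt_iff₀ hπ]
    linarith [hα.2]
  have hCnn : (0:ℝ) ≤ β ^ 2 + (1 - β) ^ 2 := by positivity
  have habs : |(D : ℝ)| ≤ (∑ j, |(n0 j : ℝ)|) + ∑ i, |((nm i : ℝ) + np i)| := by
    have : (D : ℝ) = (∑ j, (n0 j : ℝ)) + ∑ i, ((nm i : ℝ) + np i) := by
      rw [hD]; push_cast; ring
    rw [this]
    refine (abs_add_le _ _).trans (add_le_add ?_ ?_) <;>
      exact Finset.abs_sum_le_sum_abs _ _
  calc |(D : ℝ)| * (β ^ 2 + (1 - β) ^ 2)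
      ≤ ((∑ j, |(n0 j : ℝ)|) + ∑ i, |((nm i : ℝ) + np i)|) * (β ^ 2 + (1 - β) ^ 2) :=
        mul_le_mul_of_nonneg_right habs hCnn
    _ = (∑ j, |(n0 j : ℝ)| * (β ^ 2 + (1 - β) ^ 2)) +
        ∑ i, |((nm i : ℝ) + np i)| * (β ^ 2 + (1 - β) ^ 2) := by
        rw [add_mul, Finset.sum_mul, Finset.sum_mul]
    _ ≤ (∑ j, ((n0 j : ℝ)) ^ 2) +
        ∑ i, (((nm i : ℝ) + β) ^ 2 + ((np i : ℝ) - β) ^ 2) := by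
        refine add_le_add (Finset.sum_le_sum fun j _ => key_single β hβ0 hβh _)
          (Finset.sum_le_sum fun i _ => ?_)
        exact key_pair β hβ0 hβh _ _
end

section
/- Let α ∈ (0, π/2) and set C_α := (α/π)² + (1 − α/π)². Let N^v, N^b be natural numbers, let n⁰ : {1, …, N^v} → ℤ and n⁻, n⁺ : {1, …, N^b} → ℤ be families of integers, and let D := Σ_{j=1}^{N^v} n⁰_j + Σ_{i=1}^{N^b} (n⁻_i + n⁺_i). Suppose D > 0. Then equality Σ_{j=1}^{N^v} (n⁰_j)² + Σ_{i=1}^{N^b} [ (n⁻_i + α/π)² + (n⁺_i − α/π)² ] = |D| · C_α holds if and only if n⁰_j = 0 for all j, N^b = D, and n⁻_i = 0 and n⁺_i = 1 for every i = 1, …, N^b. -/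
open Finset

lemma vortex_aux (t : ℝ) (ht0 : 0 < t) (ht1 : t < 1/2) (n : ℤ) :
    0 ≤ (n:ℝ)^2 - (t^2+(1-t)^2) * n ∧ ((n:ℝ)^2 - (t^2+(1-t)^2) * n = 0 ↔ n = 0) := by
  rcases lt_trichotomy n 0 with h | h | h
  · have hn' : n ≤ -1 := by omega
    have hn : (n:ℝ) ≤ -1 := by exact_mod_cast hn'
    have hs : 0 < (n:ℝ)^2 - (t^2+(1-t)^2) * n := by
      nlinarith [mul_pos (show (0:ℝ) < -(n:ℝ) by linarith)
        (show (0:ℝ) < (t^2+(1-t)^2) - n by nlinarith)]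
    exact ⟨hs.le, ⟨fun he => absurd he hs.ne', fun he => absurd he (by omega)⟩⟩
  · subst h; norm_num
  · have hn : (1:ℝ) ≤ (n:ℝ) := by exact_mod_cast h
    have hs : 0 < (n:ℝ)^2 - (t^2+(1-t)^2) * n := by
      nlinarith [mul_nonneg (show (0:ℝ) ≤ (n:ℝ)-1 by linarith) (show (0:ℝ) ≤ (n:ℝ) by linarith),
        mul_pos ht0 (show (0:ℝ) < 1-t by linarith),
        mul_nonneg (show (0:ℝ) ≤ (n:ℝ)-1 by linarith)
          (le_of_lt (mul_pos ht0 (show (0:ℝ) < 1-t by linarith)))]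
    exact ⟨hs.le, ⟨fun he => absurd he hs.ne', fun he => absurd he (by omega)⟩⟩

lemma gm_aux (t : ℝ) (ht0 : 0 < t) (ht1 : t < 1/2) (m : ℤ) :
    0 ≤ ((m:ℝ)+t)^2 - (t^2+(1-t)^2) * m - t^2 ∧
      (((m:ℝ)+t)^2 - (t^2+(1-t)^2) * m - t^2 = 0 ↔ m = 0) := by
  rcases lt_trichotomy m 0 with h | h | h
  · have hn' : m ≤ -1 := by omega
    have hn : (m:ℝ) ≤ -1 := by exact_mod_cast hn'
    have hs : 0 < ((m:ℝ)+t)^2 - (t^2+(1-t)^2) * m - t^2 := by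
      nlinarith [mul_pos (show (0:ℝ) < -(m:ℝ) by linarith)
        (show (0:ℝ) < (t^2+(1-t)^2) - 2*t - m by nlinarith [sq_nonneg (1-t)])]
    exact ⟨hs.le, ⟨fun he => absurd he hs.ne', fun he => absurd he (by omega)⟩⟩
  · subst h; norm_num
  · have hn : (1:ℝ) ≤ (m:ℝ) := by exact_mod_cast h
    have hs : 0 < ((m:ℝ)+t)^2 - (t^2+(1-t)^2) * m - t^2 := by
      nlinarith [mul_nonneg (show (0:ℝ) ≤ (m:ℝ)-1 by linarith) (show (0:ℝ) ≤ (m:ℝ) by linarith),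
        mul_pos ht0 (show (0:ℝ) < 2-t by linarith),
        mul_nonneg (show (0:ℝ) ≤ (m:ℝ)-1 by linarith)
          (le_of_lt (mul_pos ht0 (show (0:ℝ) < 2-t by linarith)))]
    exact ⟨hs.le, ⟨fun he => absurd he hs.ne', fun he => absurd he (by omega)⟩⟩

lemma hp_aux (t : ℝ) (ht0 : 0 < t) (ht1 : t < 1/2) (p : ℤ) :
    0 ≤ ((p:ℝ)-t)^2 - (t^2+(1-t)^2) * p + t^2 ∧
      (((p:ℝ)-t)^2 - (t^2+(1-t)^2) * p + t^2 = 0 ↔ p = 1) := by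
  rcases lt_trichotomy p 1 with h | h | h
  · have hn' : p ≤ 0 := by omega
    have hn : (p:ℝ) ≤ 0 := by exact_mod_cast hn'
    have hs : 0 < ((p:ℝ)-t)^2 - (t^2+(1-t)^2) * p + t^2 := by
      nlinarith [mul_pos (show (0:ℝ) < 1-(p:ℝ) by linarith)
        (show (0:ℝ) < 2*t^2-(p:ℝ) by nlinarith)]
    exact ⟨hs.le, ⟨fun he => absurd he hs.ne', fun he => absurd he (by omega)⟩⟩
  · subst h
    have hz : (((1:ℤ):ℝ)-t)^2 - (t^2+(1-t)^2) * ((1:ℤ):ℝ) + t^2 = 0 := by push_cast; ring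
    exact ⟨hz.ge, by simp [hz]⟩
  · have hn : (2:ℝ) ≤ (p:ℝ) := by exact_mod_cast h
    have hs : 0 < ((p:ℝ)-t)^2 - (t^2+(1-t)^2) * p + t^2 := by
      nlinarith [mul_pos (show (0:ℝ) < (p:ℝ)-1 by linarith)
        (show (0:ℝ) < (p:ℝ)-2*t^2 by nlinarith)]
    exact ⟨hs.le, ⟨fun he => absurd he hs.ne', fun he => absurd he (by omega)⟩⟩



open Finset in
/-- The degree lemma (equality case, `D > 0`): equality
`Σ (n⁰)² + Σ [(n⁻ + α/π)² + (n⁺ − α/π)²] = |D|·C_α` holds iff all boundary-vortex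
degrees vanish, `N^b = D`, and every pair is `(n⁻, n⁺) = (0, 1)`. -/
theorem degree_lemma_equality_pos (α : ℝ) (hα : α ∈ Set.Ioo 0 (Real.pi / 2))
    (Nv Nb : ℕ) (n0 : Fin Nv → ℤ) (nm np : Fin Nb → ℤ) (D : ℤ)
    (hD : D = (∑ j, n0 j) + ∑ i, (nm i + np i)) (hDpos : 0 < D) :
    ((∑ j, ((n0 j : ℝ)) ^ 2) +
        ∑ i, (((nm i : ℝ) + α / Real.pi) ^ 2 + ((np i : ℝ) - α / Real.pi) ^ 2) =
      |(D : ℝ)| * ((α / Real.pi) ^ 2 + (1 - α / Real.pi) ^ 2)) ↔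
      ((∀ j, n0 j = 0) ∧ (Nb : ℤ) = D ∧ ∀ i, nm i = 0 ∧ np i = 1) := by
  obtain ⟨hα0, hα2⟩ := hα
  have hπ : (0:ℝ) < Real.pi := Real.pi_pos
  set t := α / Real.pi with htdef
  have ht0 : 0 < t := div_pos hα0 hπ
  have ht1 : t < 1/2 := by
    rw [htdef, div_lt_iff₀ hπ]; linarith
  set C : ℝ := t^2 + (1-t)^2 with hCdef
  have habs : |(D:ℝ)| = (D:ℝ) := abs_of_pos (by exact_mod_cast hDpos)
  have hDcast : (D:ℝ) = (∑ j, (n0 j:ℝ)) + ∑ i, ((nm i:ℝ) + (np i:ℝ)) := by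
    rw [hD]; push_cast; ring
  constructor
  · intro heq
    rw [habs, hDcast] at heq
    -- sum of nonneg terms equals zero
    have key : (∑ j, ((n0 j:ℝ)^2 - C * (n0 j))) +
        ∑ i, ((((nm i:ℝ)+t)^2 - C * (nm i) - t^2) + (((np i:ℝ)-t)^2 - C * (np i) + t^2)) = 0 := by
      have e1 : ∑ j, ((n0 j:ℝ)^2 - C * (n0 j)) = (∑ j, (n0 j:ℝ)^2) - C * ∑ j, (n0 j:ℝ) := by
        rw [Finset.mul_sum, Finset.sum_sub_distrib]
      have e2 : ∑ i, ((((nm i:ℝ)+t)^2 - C * (nm i) - t^2) + (((np i:ℝ)-t)^2 - C * (np i) + t^2))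
          = (∑ i, (((nm i:ℝ)+t)^2 + ((np i:ℝ)-t)^2)) - C * ∑ i, ((nm i:ℝ) + (np i:ℝ)) := by
        rw [Finset.mul_sum, ← Finset.sum_sub_distrib]
        exact Finset.sum_congr rfl fun i _ => by ring
      rw [e1, e2]; linarith [heq]
    have hFn : ∀ j ∈ Finset.univ (α := Fin Nv), 0 ≤ (n0 j:ℝ)^2 - C * (n0 j) :=
      fun j _ => (vortex_aux t ht0 ht1 (n0 j)).1
    have hGn : ∀ i ∈ Finset.univ (α := Fin Nb),
        0 ≤ (((nm i:ℝ)+t)^2 - C * (nm i) - t^2) + (((np i:ℝ)-t)^2 - C * (np i) + t^2) :=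
      fun i _ => add_nonneg (gm_aux t ht0 ht1 (nm i)).1 (hp_aux t ht0 ht1 (np i)).1
    have hS1 : ∑ j, ((n0 j:ℝ)^2 - C * (n0 j)) = 0 := by
      have h1 := Finset.sum_nonneg hFn
      have h2 := Finset.sum_nonneg hGn
      linarith
    have hS2 : ∑ i, ((((nm i:ℝ)+t)^2 - C * (nm i) - t^2) + (((np i:ℝ)-t)^2 - C * (np i) + t^2)) = 0 := by
      have h1 := Finset.sum_nonneg hFn
      linarith
    have h0 : ∀ j, n0 j = 0 := by
      intro j
      have := (Finset.sum_eq_zero_iff_of_nonneg hFn).mp hS1 j (Finset.mem_univ j)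
      exact (vortex_aux t ht0 ht1 (n0 j)).2.mp this
    have hpair : ∀ i, nm i = 0 ∧ np i = 1 := by
      intro i
      have hz := (Finset.sum_eq_zero_iff_of_nonneg hGn).mp hS2 i (Finset.mem_univ i)
      rw [hCdef] at hz
      have hm := (gm_aux t ht0 ht1 (nm i)).1
      have hp := (hp_aux t ht0 ht1 (np i)).1
      constructor
      · exact (gm_aux t ht0 ht1 (nm i)).2.mp (by linarith)
      · exact (hp_aux t ht0 ht1 (np i)).2.mp (by linarith)
    refine ⟨h0, ?_, hpair⟩
    rw [hD]
    have : ∀ i, nm i + np i = 1 := fun i => by simp [(hpair i).1, (hpair i).2]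
    simp [h0, this]
  · rintro ⟨h0, hNb, hpair⟩
    have hm : ∀ i, nm i = 0 := fun i => (hpair i).1
    have hp : ∀ i, np i = 1 := fun i => (hpair i).2
    have hDN : (D:ℝ) = (Nb:ℝ) := by exact_mod_cast hNb.symm
    rw [habs, hDN]
    simp only [h0, hm, hp]
    push_cast
    simp [Finset.sum_const, Finset.card_univ]
    ring
end

section
/- Let α ∈ (0, π/2) and set C_α := (α/π)² + (1 − α/π)². Let N^v, N^b be natural numbers, let n⁰ : {1, …, N^v} → ℤ and n⁻, n⁺ : {1, …, N^b} → ℤ be families of integers, and let D := Σ_{j=1}^{N^v} n⁰_j + Σ_{i=1}^{N^b} (n⁻_i + n⁺_i). Suppose D < 0. Then equality Σ_{j=1}^{N^v} (n⁰_j)² + Σ_{i=1}^{N^b} [ (n⁻_i + α/π)² + (n⁺_i − α/π)² ] = |D| · C_α holds if and only if n⁰_j = 0 for all j, N^b = −D, and n⁺_i = 0 and n⁻_i = −1 for every i = 1, …, N^b. -/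
open Finset

/-- For an integer `k` and a real `e` with `-1 < e < 1`, the quantity `k(k+e)`
is nonnegative and vanishes iff `k = 0`. -/
lemma key_fac (k : ℤ) (e : ℝ) (h1 : -1 < e) (h2 : e < 1) :
    0 ≤ (k : ℝ) * ((k : ℝ) + e) ∧ ((k : ℝ) * ((k : ℝ) + e) = 0 ↔ k = 0) := by
  rcases lt_trichotomy k 0 with h | h | h
  · have hk' : k ≤ -1 := by omega
    have hk : (k : ℝ) ≤ -1 := by exact_mod_cast hk'
    have hpos : 0 < (k : ℝ) * ((k : ℝ) + e) := by nlinarith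
    exact ⟨le_of_lt hpos, by constructor <;> intro h' <;> [linarith; omega]⟩
  · simp [h]
  · have hk' : 1 ≤ k := h
    have hk : 1 ≤ (k : ℝ) := by exact_mod_cast hk'
    have hpos : 0 < (k : ℝ) * ((k : ℝ) + e) := by nlinarith
    exact ⟨le_of_lt hpos, by constructor <;> intro h' <;> [linarith; omega]⟩

open Finset in
/-- The degree lemma (equality case, `D < 0`): equality
`Σ (n⁰)² + Σ [(n⁻ + α/π)² + (n⁺ − α/π)²] = |D|·C_α` holds iff all boundary-vortex
degrees vanish, `N^b = −D`, and every pair is `(n⁺, n⁻) = (0, −1)`. -/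
theorem degree_lemma_equality_neg (α : ℝ) (hα : α ∈ Set.Ioo 0 (Real.pi / 2))
    (Nv Nb : ℕ) (n0 : Fin Nv → ℤ) (nm np : Fin Nb → ℤ) (D : ℤ)
    (hD : D = (∑ j, n0 j) + ∑ i, (nm i + np i)) (hDneg : D < 0) :
    ((∑ j, ((n0 j : ℝ)) ^ 2) +
        ∑ i, (((nm i : ℝ) + α / Real.pi) ^ 2 + ((np i : ℝ) - α / Real.pi) ^ 2) =
      |(D : ℝ)| * ((α / Real.pi) ^ 2 + (1 - α / Real.pi) ^ 2)) ↔
      ((∀ j, n0 j = 0) ∧ (Nb : ℤ) = -D ∧ ∀ i, np i = 0 ∧ nm i = -1) := by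
  obtain ⟨hα0, hα2⟩ := hα
  have hπ : 0 < Real.pi := Real.pi_pos
  set t := α / Real.pi with ht_def
  have ht0 : 0 < t := div_pos hα0 hπ
  have ht2 : t < 1 / 2 := by
    rw [ht_def, div_lt_div_iff₀ hπ (by norm_num)]
    linarith
  set C : ℝ := t ^ 2 + (1 - t) ^ 2 with hC_def
  have hCm : -1 < C := by nlinarith
  have hC1 : C < 1 := by nlinarith
  have he1m : -1 < 2 * t ^ 2 - 1 := by nlinarith
  have he11 : 2 * t ^ 2 - 1 < 1 := by nlinarith
  have he2m : -1 < 1 - 4 * t + 2 * t ^ 2 := by nlinarith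
  have he21 : 1 - 4 * t + 2 * t ^ 2 < 1 := by nlinarith
  have habs : |(D : ℝ)| = -(D : ℝ) := by
    apply abs_of_neg; exact_mod_cast hDneg
  have hDc : (D : ℝ) = (∑ j, (n0 j : ℝ)) + ∑ i, ((nm i : ℝ) + (np i : ℝ)) := by
    rw [hD]; push_cast; ring
  -- per-index nonnegative quantities
  set A : Fin Nv → ℝ := fun j => (n0 j : ℝ) * ((n0 j : ℝ) + C) with hA_def
  set B : Fin Nb → ℝ := fun i =>
    ((nm i : ℝ) + 1) * (((nm i : ℝ) + 1) + (2 * t ^ 2 - 1)) +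
      (np i : ℝ) * ((np i : ℝ) + (1 - 4 * t + 2 * t ^ 2)) with hB_def
  have hAnn : ∀ j, 0 ≤ A j := fun j => (key_fac (n0 j) C hCm hC1).1
  have hB1nn : ∀ i, 0 ≤ ((nm i : ℝ) + 1) * (((nm i : ℝ) + 1) + (2 * t ^ 2 - 1)) := by
    intro i
    have := (key_fac (nm i + 1) (2 * t ^ 2 - 1) he1m he11).1
    push_cast at this
    convert this using 2 <;> push_cast <;> ring
  have hB2nn : ∀ i, 0 ≤ (np i : ℝ) * ((np i : ℝ) + (1 - 4 * t + 2 * t ^ 2)) :=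
    fun i => (key_fac (np i) (1 - 4 * t + 2 * t ^ 2) he2m he21).1
  have hBnn : ∀ i, 0 ≤ B i := fun i => add_nonneg (hB1nn i) (hB2nn i)
  -- the gap identity
  have h1 : ∑ j, A j = (∑ j, ((n0 j : ℝ)) ^ 2) + (∑ j, (n0 j : ℝ)) * C := by
    have : ∀ j, A j = (n0 j : ℝ) ^ 2 + (n0 j : ℝ) * C := fun j => by
      simp only [hA_def]; ring
    simp_rw [this, Finset.sum_add_distrib, ← Finset.sum_mul]
  have h2 : ∑ i, B i =
      (∑ i, (((nm i : ℝ) + t) ^ 2 + ((np i : ℝ) - t) ^ 2)) +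
        (∑ i, ((nm i : ℝ) + (np i : ℝ))) * C := by
    have : ∀ i, B i = (((nm i : ℝ) + t) ^ 2 + ((np i : ℝ) - t) ^ 2) +
        ((nm i : ℝ) + (np i : ℝ)) * C := fun i => by
      simp only [hB_def, hC_def]; ring
    simp_rw [this, Finset.sum_add_distrib, ← Finset.sum_mul]
    rw [Finset.sum_add_distrib]
  have hsplit : (∑ j, ((n0 j : ℝ)) ^ 2) +
      (∑ i, (((nm i : ℝ) + t) ^ 2 + ((np i : ℝ) - t) ^ 2)) - |(D : ℝ)| * C =
      (∑ j, A j) + ∑ i, B i := by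
    rw [habs]
    linear_combination C * hDc - h1 - h2
  constructor
  · intro h
    have hzero : (∑ j, A j) + ∑ i, B i = 0 := by
      rw [← hsplit]
      linarith [h]
    have hsA : 0 ≤ ∑ j, A j := Finset.sum_nonneg fun j _ => hAnn j
    have hsB : 0 ≤ ∑ i, B i := Finset.sum_nonneg fun i _ => hBnn i
    have hA0 : ∀ j, A j = 0 := by
      intro j
      have hAz : ∑ j, A j = 0 := by linarith
      exact (Finset.sum_eq_zero_iff_of_nonneg fun j _ => hAnn j).mp hAz j (mem_univ j)
    have hB0 : ∀ i, B i = 0 := by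
      intro i
      have hBz : ∑ i, B i = 0 := by linarith
      exact (Finset.sum_eq_zero_iff_of_nonneg fun i _ => hBnn i).mp hBz i (mem_univ i)
    have hn0 : ∀ j, n0 j = 0 := by
      intro j
      exact (key_fac (n0 j) C hCm hC1).2.mp (hA0 j)
    have hpair : ∀ i, np i = 0 ∧ nm i = -1 := by
      intro i
      have hB1z : ((nm i : ℝ) + 1) * (((nm i : ℝ) + 1) + (2 * t ^ 2 - 1)) = 0 := by
        have := hB0 i
        simp only [hB_def] at this
        have := hB1nn i; have := hB2nn i
        linarith [hB0 i, hB1nn i, hB2nn i]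
      have hB2z : (np i : ℝ) * ((np i : ℝ) + (1 - 4 * t + 2 * t ^ 2)) = 0 := by
        have := hB0 i
        simp only [hB_def] at this
        linarith [hB1nn i, hB2nn i]
      have hnp : np i = 0 :=
        (key_fac (np i) (1 - 4 * t + 2 * t ^ 2) he2m he21).2.mp hB2z
      have hnm : nm i + 1 = 0 := by
        apply (key_fac (nm i + 1) (2 * t ^ 2 - 1) he1m he11).2.mp
        push_cast
        linear_combination hB1z
      exact ⟨hnp, by omega⟩
    refine ⟨hn0, ?_, hpair⟩
    have : D = -(Nb : ℤ) := by
      rw [hD]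
      have e1 : ∑ j, n0 j = 0 := Finset.sum_eq_zero fun j _ => hn0 j
      have e2 : ∑ i, (nm i + np i) = ∑ i : Fin Nb, (-1 : ℤ) := by
        apply Finset.sum_congr rfl
        intro i _
        have := hpair i
        omega
      rw [e1, e2]
      simp
    omega
  · rintro ⟨hn0, hNb, hpair⟩
    have e1 : ∑ j, ((n0 j : ℝ)) ^ 2 = 0 := by
      apply Finset.sum_eq_zero
      intro j _
      rw [hn0 j]; norm_num
    have e2 : ∑ i, (((nm i : ℝ) + t) ^ 2 + ((np i : ℝ) - t) ^ 2)
        = (Nb : ℝ) * C := by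
      have : ∀ i ∈ (univ : Finset (Fin Nb)),
          (((nm i : ℝ) + t) ^ 2 + ((np i : ℝ) - t) ^ 2) = C := by
        intro i _
        obtain ⟨h1', h2'⟩ := hpair i
        rw [h1', h2']
        push_cast
        simp only [hC_def]
        ring
      rw [Finset.sum_congr rfl this]
      simp [mul_comm]
    rw [e1, e2, habs]
    have : (D : ℝ) = -(Nb : ℝ) := by exact_mod_cast (by omega : D = -(Nb : ℤ))
    rw [this]
    ring
end

section
/- Let α ∈ (0, π/2) and set C_α := (α/π)² + (1 − α/π)². Let N be a natural number and let n : {1, …, N} → ℤ and τ : {1, …, N} → {−1, 0, 1} be families with Σ_{ℓ=1}^{N} τ_ℓ = 0, and let D := Σ_{ℓ=1}^{N} n_ℓ. Then Σ_{ℓ=1}^{N} (n_ℓ − τ_ℓ·(α/π))² ≥ |D| · C_α. -/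
/-- Key pointwise inequality: for `t ∈ (0, 1/2)`, integer `m`, `τ ∈ {-1,0,1}`,
`(m - τ t)² ≥ C m - τ t²` where `C = t² + (1-t)²`. -/
lemma degree_key (t : ℝ) (ht0 : 0 < t) (ht1 : t < 1/2) (m τ : ℤ)
    (hτ : τ = -1 ∨ τ = 0 ∨ τ = 1) :
    (t ^ 2 + (1 - t) ^ 2) * (m : ℝ) - (τ : ℝ) * t ^ 2 ≤ ((m : ℝ) - (τ : ℝ) * t) ^ 2 := by
  have hm : (m : ℝ) ≤ -1 ∨ (m : ℝ) = 0 ∨ 1 ≤ (m : ℝ) := by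
    rcases lt_trichotomy m 0 with h | h | h
    · have h' : m ≤ -1 := by omega
      exact Or.inl (by exact_mod_cast h')
    · exact Or.inr (Or.inl (by exact_mod_cast h))
    · exact Or.inr (Or.inr (by exact_mod_cast h))
  rcases hτ with h | h | h <;> subst h <;> push_cast <;>
      rcases hm with h | h | h
  -- τ = -1
  · nlinarith [mul_nonneg (by linarith : (0:ℝ) ≤ -(m:ℝ))
      (by nlinarith [sq_nonneg (1 - t)] : (0:ℝ) ≤ 1 - 4*t + 2*t^2 - (m:ℝ))]
  · rw [h]; nlinarith
  · nlinarith [mul_nonneg (by linarith : (0:ℝ) ≤ (m:ℝ) - 1) (by linarith : (0:ℝ) ≤ (m:ℝ)),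
      mul_nonneg (by linarith : (0:ℝ) ≤ (m:ℝ)) (mul_pos ht0 (by linarith : (0:ℝ) < 2 - t)).le]
  -- τ = 0
  · nlinarith [mul_nonneg (by linarith : (0:ℝ) ≤ -(m:ℝ))
      (by nlinarith : (0:ℝ) ≤ 1 - 2*t + 2*t^2 - (m:ℝ))]
  · rw [h]; nlinarith
  · nlinarith [mul_nonneg (by linarith : (0:ℝ) ≤ (m:ℝ) - 1) (by linarith : (0:ℝ) ≤ (m:ℝ)),
      mul_nonneg (by linarith : (0:ℝ) ≤ (m:ℝ)) (mul_pos ht0 (by linarith : (0:ℝ) < 1 - t)).le]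
  -- τ = 1
  · nlinarith [mul_nonneg (by linarith : (0:ℝ) ≤ 1 - (m:ℝ))
      (by nlinarith : (0:ℝ) ≤ 2*t^2 - (m:ℝ))]
  · rw [h]; nlinarith
  · nlinarith [mul_nonneg (by linarith : (0:ℝ) ≤ (m:ℝ) - 1)
      (by nlinarith : (0:ℝ) ≤ (m:ℝ) - 2*t^2)]

open Finset in
/-- Concise form of the degree lemma: defects carry degrees `n_ℓ ∈ ℤ` and boojum
numbers `τ_ℓ ∈ {−1, 0, 1}` with `Σ τ_ℓ = 0`; then
`Σ (n_ℓ − τ_ℓ·α/π)² ≥ |D|·C_α` where `D = Σ n_ℓ`. -/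
theorem degree_lemma_concise (α : ℝ) (hα : α ∈ Set.Ioo 0 (Real.pi / 2))
    (N : ℕ) (n : Fin N → ℤ) (τ : Fin N → ℤ)
    (hτ : ∀ ℓ, τ ℓ = -1 ∨ τ ℓ = 0 ∨ τ ℓ = 1) (hsum : (∑ ℓ, τ ℓ) = 0)
    (D : ℤ) (hD : D = ∑ ℓ, n ℓ) :
    ∑ ℓ, ((n ℓ : ℝ) - (τ ℓ : ℝ) * (α / Real.pi)) ^ 2 ≥
      |(D : ℝ)| * ((α / Real.pi) ^ 2 + (1 - α / Real.pi) ^ 2) := by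
  obtain ⟨hα0, hα2⟩ := hα
  have hπ : 0 < Real.pi := Real.pi_pos
  set t : ℝ := α / Real.pi with htdef
  have ht0 : 0 < t := div_pos hα0 hπ
  have ht1 : t < 1/2 := by
    rw [htdef, div_lt_iff₀ hπ]
    linarith
  set C : ℝ := t ^ 2 + (1 - t) ^ 2 with hCdef
  have hτR : ∑ ℓ, ((τ ℓ : ℝ)) = 0 := by
    have : ((∑ ℓ, τ ℓ : ℤ) : ℝ) = 0 := by rw [hsum]; norm_num
    push_cast at this
    exact this
  have hDR : (D : ℝ) = ∑ ℓ, ((n ℓ : ℝ)) := by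
    rw [hD]; push_cast; rfl
  have h1 : C * (D : ℝ) ≤ ∑ ℓ, ((n ℓ : ℝ) - (τ ℓ : ℝ) * t) ^ 2 := by
    calc C * (D : ℝ) = ∑ ℓ, (C * (n ℓ : ℝ) - (τ ℓ : ℝ) * t ^ 2) := by
          rw [Finset.sum_sub_distrib, ← Finset.mul_sum, ← Finset.sum_mul, hτR, hDR]
          ring
      _ ≤ ∑ ℓ, ((n ℓ : ℝ) - (τ ℓ : ℝ) * t) ^ 2 :=
          Finset.sum_le_sum fun ℓ _ => degree_key t ht0 ht1 (n ℓ) (τ ℓ) (hτ ℓ)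
  have h2 : -(C * (D : ℝ)) ≤ ∑ ℓ, ((n ℓ : ℝ) - (τ ℓ : ℝ) * t) ^ 2 := by
    have key : ∀ ℓ, C * (-(n ℓ : ℝ)) - (-(τ ℓ : ℝ)) * t ^ 2 ≤
        ((n ℓ : ℝ) - (τ ℓ : ℝ) * t) ^ 2 := by
      intro ℓ
      have h := degree_key t ht0 ht1 (-n ℓ) (-τ ℓ) (by rcases hτ ℓ with h | h | h <;> simp [h])
      push_cast at h
      calc C * (-(n ℓ : ℝ)) - (-(τ ℓ : ℝ)) * t ^ 2
          ≤ ((-(n ℓ : ℝ)) - (-(τ ℓ : ℝ)) * t) ^ 2 := h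
        _ = ((n ℓ : ℝ) - (τ ℓ : ℝ) * t) ^ 2 := by ring
    calc -(C * (D : ℝ)) = ∑ ℓ, (C * (-(n ℓ : ℝ)) - (-(τ ℓ : ℝ)) * t ^ 2) := by
          rw [Finset.sum_sub_distrib, ← Finset.mul_sum, ← Finset.sum_mul]
          have a : ∑ ℓ, (-(n ℓ : ℝ)) = -(D : ℝ) := by rw [hDR]; simp
          have b : ∑ ℓ, (-(τ ℓ : ℝ)) = 0 := by
            simp only [Finset.sum_neg_distrib, hτR, neg_zero]
          rw [a, b]; ring
      _ ≤ ∑ ℓ, ((n ℓ : ℝ) - (τ ℓ : ℝ) * t) ^ 2 :=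
          Finset.sum_le_sum fun ℓ _ => key ℓ
  rcases abs_cases ((D : ℝ)) with ⟨h, _⟩ | ⟨h, _⟩ <;> rw [h] <;> linarith
end
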